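/- Affine case of Lemma 3.24 (classification of coincidences of the coding map): Let (g_1,…,g_m), g_i(z) = a_i z + b_i with |a_i| > 1, have limit set J, coding map π and fixed points p_j = −b_j/(a_j − 1), and suppose conditions (i), (ii), (iii) hold. If ω, τ ∈ Σ_m satisfy ω_1 ≠ τ_1 and π(ω) = π(τ), then, setting i = ω_1 and j = τ_1, the point x = π(ω) lies in φ_i(J) ∩ φ_j(J), one has g_i(x) = p_{α_{ij}} and g_j(x) = p_{α_{ji}}, and the sequences have constant tails: σω = (α_{ij})^∞ = (α_{ij}, α_{ij}, α_{ij}, …) and στ = (α_{ji})^∞. -/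

import Mathlib

open MeasureTheory Filter Set Metric ENNReal Topology

/-- `affineIter a b ω n = φ_{ω₁} ∘ ⋯ ∘ φ_{ω_n} (0)`, where `φ_i(z) = (z - b i)/(a i)`
is the inverse of the affine map `g_i(z) = a i * z + b i`. -/
noncomputable def affineIter {m : ℕ} (a b : Fin m → ℂ) (ω : ℕ → Fin m) (n : ℕ) : ℂ :=
  (List.range n).foldr (fun k z => (z - b (ω k)) / a (ω k)) 0

/-- The coding map `π(ω) = lim_{n→∞} φ_{ω₁} ∘ ⋯ ∘ φ_{ω_n}(0)`. -/
noncomputable def codingMap {m : ℕ} (a b : Fin m → ℂ) (ω : ℕ → Fin m) : ℂ :=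
  limUnder atTop (affineIter a b ω)

/-- The limit set `J = π(Σ_m)`, i.e. the Julia set of the semigroup `⟨g_1,…,g_m⟩`. -/
noncomputable def limitSet {m : ℕ} (a b : Fin m → ℂ) : Set ℂ :=
  Set.range (codingMap a b)

/-- The transversality condition (TC) for a family of expanding affine systems over `U`:
there is `C₁ > 0` such that for every `r ∈ (0, D]` and all `ω, τ` with distinct first
symbols, `Leb {λ ∈ U : |π_λ(ω) - π_λ(τ)| ≤ r} ≤ C₁ r²`. -/
def TCond {m : ℕ} {E : Type*} [MeasurableSpace E] (μ : Measure E)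
    (U : Set E) (a b : E → Fin m → ℂ) (D : ℝ) : Prop :=
  ∃ C₁ > (0:ℝ), ∀ r ∈ Set.Ioc (0:ℝ) D, ∀ ω τ : ℕ → Fin m, ω 0 ≠ τ 0 →
    μ {l ∈ U | ‖codingMap (a l) (b l) ω - codingMap (a l) (b l) τ‖ ≤ r}
      ≤ ENNReal.ofReal (C₁ * r ^ 2)

/-- The strong transversality condition (STC), with real parameter dimension `d`:
there is `C₁' > 0` such that for every `r ∈ (0, D]` and all `ω, τ` with distinct first
symbols, the set `{λ ∈ U : |π_λ(ω) - π_λ(τ)| ≤ r}` can be covered by at most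
`C₁' r^(2-d)` balls of radius `r`. -/
def STCond {m : ℕ} {E : Type*} [PseudoMetricSpace E]
    (U : Set E) (a b : E → Fin m → ℂ) (D : ℝ) (d : ℝ) : Prop :=
  ∃ C > (0:ℝ), ∀ r ∈ Set.Ioc (0:ℝ) D, ∀ ω τ : ℕ → Fin m, ω 0 ≠ τ 0 →
    ∃ S : Finset E, (S.card : ℝ) ≤ C * r ^ ((2:ℝ) - d) ∧
      {l ∈ U | ‖codingMap (a l) (b l) ω - codingMap (a l) (b l) τ‖ ≤ r}
        ⊆ ⋃ x ∈ S, Metric.closedBall x r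

/-- The analytic transversality condition (ATC) for a holomorphic family of expanding
affine systems: whenever `π_λ(ω) = π_λ(τ)` with `ω₁ ≠ τ₁`, the complex gradient of
`λ ↦ π_λ(ω) - π_λ(τ)` at `λ` is nonzero. -/
def ATCond {m : ℕ} {E : Type*} [NormedAddCommGroup E] [NormedSpace ℂ E]
    (U : Set E) (a b : E → Fin m → ℂ) : Prop :=
  ∀ ω τ : ℕ → Fin m, ω 0 ≠ τ 0 → ∀ l ∈ U,
    codingMap (a l) (b l) ω = codingMap (a l) (b l) τ →
    fderiv ℂ (fun μ => codingMap (a μ) (b μ) ω - codingMap (a μ) (b μ) τ) l ≠ 0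

lemma affineIter_succ' {m : ℕ} (a b : Fin m → ℂ) (ω : ℕ → Fin m) (n : ℕ) :
    affineIter a b ω (n + 1)
      = (affineIter a b (fun k => ω (k + 1)) n - b (ω 0)) / a (ω 0) := by
  simp only [affineIter, List.range_succ_eq_map, List.foldr_cons, List.foldr_map]

lemma affineIter_tendsto {m : ℕ} [Nonempty (Fin m)] (a b : Fin m → ℂ)
    (haexp : ∀ i, 1 < ‖a i‖) (ω : ℕ → Fin m) :
    Tendsto (affineIter a b ω) atTop (𝓝 (codingMap a b ω)) := by
  obtain ⟨L, hL⟩ : ∃ L, Tendsto (affineIter a b ω) atTop (𝓝 L) := by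
    set ρ : ℝ := Finset.univ.sup' Finset.univ_nonempty
      (fun i : Fin m => (‖a i‖)⁻¹) with hρdef
    set C : ℝ := Finset.univ.sup' Finset.univ_nonempty
      (fun i : Fin m => ‖b i / a i‖) with hCdef
    have hρi : ∀ i, (‖a i‖)⁻¹ ≤ ρ := fun i =>
      Finset.le_sup' (fun i : Fin m => (‖a i‖)⁻¹) (Finset.mem_univ i)
    have hρ1 : ρ < 1 := by
      rw [hρdef, Finset.sup'_lt_iff]
      intro i _
      rw [inv_lt_one_iff₀]
      right; exact haexp i
    have hρ0 : 0 ≤ ρ := le_trans (by positivity) (hρi (Classical.arbitrary _))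
    have hCi : ∀ i, ‖b i / a i‖ ≤ C := fun i =>
      Finset.le_sup' (fun i : Fin m => ‖b i / a i‖) (Finset.mem_univ i)
    have hC0 : 0 ≤ C := le_trans (norm_nonneg _) (hCi (Classical.arbitrary _))
    have key : ∀ n (η : ℕ → Fin m),
        dist (affineIter a b η n) (affineIter a b η (n + 1)) ≤ C * ρ ^ n := by
      intro n
      induction n with
      | zero =>
        intro η
        simp only [pow_zero, mul_one]
        have h0 : affineIter a b η 0 = 0 := by simp [affineIter]
        have h1 : affineIter a b η 1 = (0 - b (η 0)) / a (η 0) := by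
          have h := affineIter_succ' a b η 0
          simpa [affineIter] using h
        rw [h0, h1, Complex.dist_eq]
        calc ‖0 - (0 - b (η 0)) / a (η 0)‖
            = ‖b (η 0) / a (η 0)‖ := by ring_nf
          _ ≤ C := hCi _
      | succ n ih =>
        intro η
        rw [affineIter_succ' a b η n, affineIter_succ' a b η (n + 1),
          Complex.dist_eq]
        have heq : (affineIter a b (fun k => η (k + 1)) n - b (η 0)) / a (η 0)
            - (affineIter a b (fun k => η (k + 1)) (n + 1) - b (η 0)) / a (η 0)
            = (affineIter a b (fun k => η (k + 1)) n
                - affineIter a b (fun k => η (k + 1)) (n + 1)) / a (η 0) := by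
          ring
        rw [heq, norm_div, div_eq_mul_inv]
        calc ‖affineIter a b (fun k => η (k + 1)) n
              - affineIter a b (fun k => η (k + 1)) (n + 1)‖ * (‖a (η 0)‖)⁻¹
            ≤ (C * ρ ^ n) * ρ := by
              apply mul_le_mul _ (hρi _) (by positivity) (by positivity)
              rw [← Complex.dist_eq]
              exact ih _
          _ = C * ρ ^ (n + 1) := by ring
    exact cauchySeq_tendsto_of_complete
      (cauchySeq_of_le_geometric ρ C hρ1 (fun n => key n ω))
  have he : codingMap a b ω = L := hL.limUnder_eq
  rw [he]; exact hL

lemma codingMap_shift {m : ℕ} [Nonempty (Fin m)] (a b : Fin m → ℂ)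
    (haexp : ∀ i, 1 < ‖a i‖) (ω : ℕ → Fin m) :
    codingMap a b ω = (codingMap a b (fun k => ω (k + 1)) - b (ω 0)) / a (ω 0) := by
  have h1 := affineIter_tendsto a b haexp (fun k => ω (k + 1))
  have h2 : Tendsto (affineIter a b ω) atTop
      (𝓝 ((codingMap a b (fun k => ω (k + 1)) - b (ω 0)) / a (ω 0))) := by
    rw [← Filter.tendsto_add_atTop_iff_nat 1]
    simp only [affineIter_succ']
    exact (h1.sub tendsto_const_nhds).div_const _
  exact h2.limUnder_eq

lemma g_codingMap {m : ℕ} [Nonempty (Fin m)] (a b : Fin m → ℂ)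
    (haexp : ∀ i, 1 < ‖a i‖) (ω : ℕ → Fin m) :
    a (ω 0) * codingMap a b ω + b (ω 0) = codingMap a b (fun k => ω (k + 1)) := by
  have ha : a (ω 0) ≠ 0 := by
    intro h
    have := haexp (ω 0)
    rw [h] at this
    norm_num at this
  rw [codingMap_shift a b haexp ω]
  field_simp
  ring

/-- **Affine case of Lemma 3.24** (classification of coincidences of the coding map).
Let `g_i(z) = a_i z + b_i` with `|a_i| > 1`, with limit set `J`, coding map `π`,
inverse branches `φ_i(z) = (z - b_i)/a_i` and fixed points `p_j = -b_j/(a_j - 1)`,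
satisfying conditions (i), (ii), (iii). If `ω₁ ≠ τ₁` and `π(ω) = π(τ)` then, with
`i = ω₁`, `j = τ₁` and `x = π(ω)`, we have `x ∈ φ_i(J) ∩ φ_j(J)`, `g_i(x) = p_{α i j}`,
`g_j(x) = p_{α j i}`, and `σω = (α i j)^∞`, `στ = (α j i)^∞`. -/
theorem stmt12 {m : ℕ} (hm : 2 ≤ m) (a b : Fin m → ℂ)
    (haexp : ∀ i, 1 < ‖a i‖)
    (J : Set ℂ) (hJ : J = limitSet a b)
    (φ : Fin m → ℂ → ℂ) (hφ : ∀ i z, φ i z = (z - b i) / a i)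
    (p : Fin m → ℂ) (hp : ∀ j, p j = -b j / (a j - 1))
    (α : Fin m → Fin m → Fin m)
    -- condition (i)
    (hi : ∀ i j, i ≠ j → ∀ x ∈ (φ i '' J) ∩ (φ j '' J), a i * x + b i = p (α i j))
    -- condition (ii)
    (hii : ∀ i j k : Fin m, i ≠ j → j ≠ k → i ≠ k →
      ∀ x ∈ (φ i '' J) ∩ (φ j '' J), a k * x + b k ∉ J)
    -- condition (iii)
    (hiii : ∀ j k, j ≠ k → a k * p j + b k ∉ J) :
    ∀ ω τ : ℕ → Fin m, ω 0 ≠ τ 0 → codingMap a b ω = codingMap a b τ →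
      codingMap a b ω ∈ (φ (ω 0) '' J) ∩ (φ (τ 0) '' J) ∧
      a (ω 0) * codingMap a b ω + b (ω 0) = p (α (ω 0) (τ 0)) ∧
      a (τ 0) * codingMap a b ω + b (τ 0) = p (α (τ 0) (ω 0)) ∧
      (∀ n : ℕ, 1 ≤ n → ω n = α (ω 0) (τ 0)) ∧
      (∀ n : ℕ, 1 ≤ n → τ n = α (τ 0) (ω 0)) := by
  haveI : Nonempty (Fin m) := ⟨⟨0, by omega⟩⟩
  have ha0 : ∀ i, a i ≠ 0 := by
    intro i h
    have := haexp i
    rw [h] at this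
    norm_num at this
  have hg : ∀ η : ℕ → Fin m,
      a (η 0) * codingMap a b η + b (η 0) = codingMap a b (fun k => η (k + 1)) :=
    g_codingMap a b haexp
  intro ω τ h01 hπ
  have hJm : ∀ η : ℕ → Fin m, codingMap a b η ∈ J := fun η => by
    rw [hJ]; exact Set.mem_range_self η
  have hφg : ∀ η : ℕ → Fin m, φ (η 0) (codingMap a b (fun k => η (k + 1)))
      = codingMap a b η := by
    intro η
    rw [hφ, ← hg η, add_sub_cancel_right, mul_div_cancel_left₀ _ (ha0 _)]
  have hmem : codingMap a b ω ∈ (φ (ω 0) '' J) ∩ (φ (τ 0) '' J) := by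
    refine ⟨⟨codingMap a b (fun k => ω (k + 1)), hJm _, hφg ω⟩,
      ⟨codingMap a b (fun k => τ (k + 1)), hJm _, ?_⟩⟩
    rw [hφg τ, hπ]
  have hxi := hi (ω 0) (τ 0) h01 _ hmem
  have hxj := hi (τ 0) (ω 0) h01.symm _ ⟨hmem.2, hmem.1⟩
  have hσω : codingMap a b (fun k => ω (k + 1)) = p (α (ω 0) (τ 0)) := by
    rw [← hg ω]; exact hxi
  have hστ : codingMap a b (fun k => τ (k + 1)) = p (α (τ 0) (ω 0)) := by
    rw [← hg τ, ← hπ]; exact hxj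
  have step : ∀ (β : Fin m) (η : ℕ → Fin m), codingMap a b η = p β →
      η 0 = β ∧ codingMap a b (fun k => η (k + 1)) = p β := by
    intro β η hη
    have h1 : codingMap a b (fun k => η (k + 1)) = a (η 0) * p β + b (η 0) := by
      rw [← hg η, hη]
    by_cases h : η 0 = β
    · refine ⟨h, ?_⟩
      rw [h1, h, hp]
      have h2 : a β - 1 ≠ 0 := by
        intro e
        have he : a β = 1 := by linear_combination e
        have := haexp β
        rw [he] at this
        norm_num at this
      field_simp
      ring
    · exact absurd (hJm (fun k => η (k + 1))) (h1 ▸ hiii β (η 0) (Ne.symm h))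
  have tail : ∀ (β : Fin m) (n : ℕ) (η : ℕ → Fin m),
      codingMap a b η = p β → η n = β := by
    intro β n
    induction n with
    | zero => exact fun η hη => (step β η hη).1
    | succ n ih => exact fun η hη => ih _ (step β η hη).2
  refine ⟨hmem, hxi, hxj, ?_, ?_⟩
  · intro n hn
    obtain ⟨k, rfl⟩ : ∃ k, n = k + 1 := ⟨n - 1, by omega⟩
    exact tail _ k _ hσω
  · intro n hn
    obtain ⟨k, rfl⟩ : ∃ k, n = k + 1 := ⟨n - 1, by omega⟩
    exact tail _ k _ hστ
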